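/- Let G = (V, E) be a finite simple graph and 0 < a < b ≤ 2a. Let V carry the metric where adjacent vertices are at distance b and all other distinct vertices are at distance a. If m is the largest positive integer such that 2·d_GH(aΔ_m, V) = b, then the chromatic number of G equals m + 1. -/

import Mathlib

open GromovHausdorff Metric Set Function

/-- `Δ` is a simplex of cardinality `n` and non-zero distance `l`. -/
def IsSimplexOf (Δ : Type) [MetricSpace Δ] [Fintype Δ] (n : ℕ) (l : ℝ) : Prop :=
  Fintype.card Δ = n ∧ ∀ x y : Δ, x ≠ y → dist x y = l

/-- The underlying type of the `n`-point simplex. -/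
def SimplexPt (n : ℕ) : Type := Fin n

instance (n : ℕ) : Fintype (SimplexPt n) := inferInstanceAs (Fintype (Fin n))

instance (n : ℕ) : DecidableEq (SimplexPt n) := inferInstanceAs (DecidableEq (Fin n))

theorem card_simplexPt (n : ℕ) : Fintype.card (SimplexPt n) = n := Fintype.card_fin n

/-- The simplex metric on `Fin n`: all nonzero distances equal `a`. -/
def simplexMetric (n : ℕ) {a : ℝ} (ha : 0 < a) : MetricSpace (SimplexPt n) :=
  letI : TopologicalSpace (SimplexPt n) := ⊥
  haveI : DiscreteTopology (SimplexPt n) := ⟨rfl⟩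
  MetricSpace.ofDistTopology (fun x y => if x = y then 0 else a)
    (fun x => by simp)
    (fun x y => by by_cases h : x = y <;> simp [h, eq_comm]
      )
    (fun x y z => by
      by_cases hxz : x = z <;> by_cases hxy : x = y <;> by_cases hyz : y = z <;>
        simp_all <;> linarith)
    (fun s => by
      constructor
      · intro _ x hx
        exact ⟨a, ha, fun y hy => by
          by_cases h : x = y
          · exact h ▸ hx
          · simp only [if_neg h] at hy; exact absurd hy (lt_irrefl a)⟩
      · intro _; exact isOpen_discrete s)
    (fun x y h => by by_cases hxy : x = y; exact hxy; simp only [if_neg hxy] at h; exact absurd h (ne_of_gt ha))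

theorem simplexMetric_dist (n : ℕ) {a : ℝ} (ha : 0 < a) (x y : SimplexPt n) :
    @dist _ (simplexMetric n ha).toDist x y = if x = y then 0 else a := rfl

theorem my_ghDist_comm (X Y : Type) [MetricSpace X] [CompactSpace X] [Nonempty X]
    [MetricSpace Y] [CompactSpace Y] [Nonempty Y] : ghDist X Y = ghDist Y X :=
  dist_comm _ _

/-- Upper bound for the GH distance via a surjection with bounded distortion. -/
theorem two_ghDist_le_of_surj {X Y : Type} [MetricSpace X] [CompactSpace X] [Nonempty X]
    [MetricSpace Y] [CompactSpace Y] [Nonempty Y] (Φ : X → Y) (hsurj : Function.Surjective Φ)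
    {ε : ℝ} (H : ∀ x y : X, |dist x y - dist (Φ x) (Φ y)| ≤ ε) :
    2 * ghDist X Y ≤ ε := by
  have h := ghDist_le_of_approx_subsets (X := X) (Y := Y) (s := (univ : Set X))
    (fun x => Φ x) (ε₁ := 0) (ε₂ := ε) (ε₃ := 0)
    (fun x => ⟨x, mem_univ x, by simp⟩)
    (fun y => by
      obtain ⟨x, hx⟩ := hsurj y
      exact ⟨⟨x, mem_univ x⟩, by simp [hx]⟩)
    (fun x y => by simpa [Subtype.dist_eq] using H x y)
  linarith

/-- If the GH distance to a finite space `Δ` is `< b/2`, with all edges of `G` having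
length `b`, then `G` is colorable with `card Δ` colors. -/
theorem colorable_of_two_ghDist_lt {V : Type} [MetricSpace V] [Fintype V] [Nonempty V]
    (G : SimpleGraph V) {b : ℝ}
    (hadj : ∀ x y : V, G.Adj x y → dist x y = b)
    (Δ : Type) [MetricSpace Δ] [Fintype Δ] [Nonempty Δ]
    (h : 2 * ghDist Δ V < b) : G.Colorable (Fintype.card Δ) := by
  set f := optimalGHInjl Δ V
  set g := optimalGHInjr Δ V
  have hf : Isometry f := isometry_optimalGHInjl Δ V
  have hg : Isometry g := isometry_optimalGHInjr Δ V
  have hH : hausdorffDist (range f) (range g) < b / 2 := by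
    rw [hausdorffDist_optimal]; linarith
  have hfin :=
    hausdorffEdist_ne_top_of_nonempty_of_bounded (range_nonempty f) (range_nonempty g)
      (isCompact_range hf.continuous).isBounded (isCompact_range hg.continuous).isBounded
  have key : ∀ v : V, ∃ δ : Δ, dist (f δ) (g v) < b / 2 := by
    intro v
    obtain ⟨x, hx, hd⟩ := exists_dist_lt_of_hausdorffDist_lt' (mem_range_self v) hH hfin
    obtain ⟨δ, rfl⟩ := hx
    exact ⟨δ, hd⟩
  choose C hC using key
  refine (SimpleGraph.Coloring.mk C ?_).colorable
  intro x y hxy hCeq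
  have hb' : dist x y = b := hadj x y hxy
  have h1 := hC x
  have h2 := hC y
  rw [hCeq] at h1
  have : dist (g x) (g y) ≤ dist (g x) (f (C y)) + dist (f (C y)) (g y) := dist_triangle _ _ _
  rw [hg.dist_eq, hb'] at this
  rw [dist_comm] at h1
  linarith

/-- A colorable graph on at least `k` vertices admits a *surjective* proper `k`-coloring. -/
theorem exists_surjective_coloring {V : Type} [Fintype V] [DecidableEq V] {k : ℕ}
    (G : SimpleGraph V) (hc : G.Colorable k) (hk : k ≤ Fintype.card V) :
    ∃ C : V → Fin k, (∀ x y : V, G.Adj x y → C x ≠ C y) ∧ Function.Surjective C := by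
  obtain ⟨c₀⟩ := hc
  have main : ∀ (j : ℕ) (c : V → Fin k), (∀ x y : V, G.Adj x y → c x ≠ c y) →
      k - (Finset.univ.image c).card ≤ j →
      ∃ C : V → Fin k, (∀ x y : V, G.Adj x y → C x ≠ C y) ∧ Function.Surjective C := by
    intro j
    induction j with
    | zero =>
      intro c hp hj
      refine ⟨c, hp, ?_⟩
      have hcard : k ≤ (Finset.univ.image c).card := by omega
      have : Finset.univ.image c = Finset.univ := Finset.eq_univ_of_card _
        (le_antisymm (Finset.card_le_univ _) (by simpa using hcard))
      intro i
      have : i ∈ Finset.univ.image c := this ▸ Finset.mem_univ i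
      obtain ⟨v, _, hv⟩ := Finset.mem_image.mp this
      exact ⟨v, hv⟩
    | succ j ih =>
      intro c hp hj
      by_cases hdone : (Finset.univ.image c) = Finset.univ
      · refine ⟨c, hp, fun i => ?_⟩
        have : i ∈ Finset.univ.image c := hdone ▸ Finset.mem_univ i
        obtain ⟨v, _, hv⟩ := Finset.mem_image.mp this
        exact ⟨v, hv⟩
      · -- there is an unused color i
        obtain ⟨i, hi⟩ : ∃ i : Fin k, i ∉ Finset.univ.image c := by
          by_contra hcon
          push_neg at hcon
          exact hdone (Finset.eq_univ_of_forall hcon)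
        have himlt : (Finset.univ.image c).card < k :=
          lt_of_le_of_ne (by simpa using Finset.card_le_univ (Finset.univ.image c))
            (fun h => hdone (Finset.eq_univ_of_card _ (by simpa using h)))
        -- c is not injective
        have hninj : ¬ Function.Injective c := by
          intro hinj
          have : Fintype.card V ≤ Fintype.card (Fin k) := Fintype.card_le_of_injective c hinj
          have himV : (Finset.univ.image c).card = Fintype.card V := by
            rw [Finset.card_image_of_injective _ hinj, Finset.card_univ]
          omega
        obtain ⟨x, y, hxy, hne⟩ : ∃ x y : V, c x = c y ∧ x ≠ y := by
          by_contra hcon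
          push_neg at hcon
          exact hninj fun x y h => by
            by_contra hne
            exact hne (hcon x y h)
        -- recolor x with i
        set c' := Function.update c x i with hc'
        have hp' : ∀ u v : V, G.Adj u v → c' u ≠ c' v := by
          intro u v huv
          by_cases hu : u = x <;> by_cases hv : v = x
          · exfalso; rw [hu, hv] at huv; exact G.loopless.irrefl x huv
          · subst hu
            simp only [hc', Function.update_self, Function.update_of_ne hv]
            intro h
            exact hi (Finset.mem_image.mpr ⟨v, Finset.mem_univ v, h.symm⟩)
          · subst hv
            simp only [hc', Function.update_self, Function.update_of_ne hu]
            intro h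
            exact hi (Finset.mem_image.mpr ⟨u, Finset.mem_univ u, h⟩)
          · simp only [hc', Function.update_of_ne hu, Function.update_of_ne hv]
            exact hp u v huv
        have hsub : insert i (Finset.univ.image c) ⊆ Finset.univ.image c' := by
          intro j' hj'
          rcases Finset.mem_insert.mp hj' with rfl | hj'
          · exact Finset.mem_image.mpr ⟨x, Finset.mem_univ x, by simp [hc']⟩
          · obtain ⟨w, _, hw⟩ := Finset.mem_image.mp hj'
            by_cases hwx : w = x
            · subst hwx
              exact Finset.mem_image.mpr ⟨y, Finset.mem_univ y,
                by rw [hc', Function.update_of_ne (Ne.symm hne), ← hxy, hw]⟩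
            · exact Finset.mem_image.mpr ⟨w, Finset.mem_univ w,
                by rw [hc', Function.update_of_ne hwx, hw]⟩
        have hcard' : (Finset.univ.image c).card + 1 ≤ (Finset.univ.image c').card := by
          calc (Finset.univ.image c).card + 1 = (insert i (Finset.univ.image c)).card := by
                rw [Finset.card_insert_of_notMem hi]
            _ ≤ _ := Finset.card_le_card hsub
        exact ih c' hp' (by omega)
  have hne : (Finset.univ.image c₀).card ≥ 0 := Nat.zero_le _
  exact main k c₀ (fun x y h => c₀.valid h) (by omega)

/-- Let `G` be a finite simple graph on `V`, `0 < a < b ≤ 2a`, and let `V` carry the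
metric in which adjacent vertices are at distance `b` and all other distinct vertices
are at distance `a`. If `m` is the largest positive integer with `2 d_GH(aΔ_m, V) = b`,
then the chromatic number of `G` equals `m + 1`. -/
theorem chromaticNumber_eq_of_ghDist (V : Type) [MetricSpace V] [Fintype V] [Nonempty V]
    (G : SimpleGraph V) [DecidableRel G.Adj] (a b : ℝ) (ha : 0 < a) (hab : a < b) (hb2a : b ≤ 2 * a)
    (hdist : ∀ x y : V, x ≠ y → dist x y = if G.Adj x y then b else a)
    (m : ℕ) (hm : 0 < m)
    (hmeq : ∀ (Δ : Type) (_ : MetricSpace Δ) (_ : Fintype Δ) (_ : Nonempty Δ),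
      IsSimplexOf Δ m a → 2 * GromovHausdorff.ghDist Δ V = b)
    (hmax : ∀ m' : ℕ, m < m' →
      ∀ (Δ : Type) (_ : MetricSpace Δ) (_ : Fintype Δ) (_ : Nonempty Δ),
        IsSimplexOf Δ m' a → 2 * GromovHausdorff.ghDist Δ V ≠ b) :
    G.chromaticNumber = m + 1 := by
  classical
  set N := Fintype.card V with hN
  have hNpos : 0 < N := Fintype.card_pos
  have hVle : ∀ x y : V, dist x y ≤ b := by
    intro x y
    by_cases hxy : x = y
    · subst hxy; rw [dist_self]; linarith
    · rw [hdist x y hxy]; split_ifs <;> linarith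
  -- Part 1: G is not m-colorable.
  have hnotm : ¬ G.Colorable m := by
    intro hcol
    letI iΔ : MetricSpace (SimplexPt m) := simplexMetric m ha
    haveI hneΔ : Nonempty (SimplexPt m) := ⟨(⟨0, hm⟩ : Fin m)⟩
    have hsp : IsSimplexOf (SimplexPt m) m a :=
      ⟨card_simplexPt m, fun x y h => by rw [simplexMetric_dist m ha, if_neg h]⟩
    have heq := hmeq (SimplexPt m) iΔ inferInstance hneΔ hsp
    have hle : 2 * ghDist (SimplexPt m) V ≤ a := by
      rcases le_or_gt m N with hmN | hNm
      · -- surjective proper coloring V → SimplexPt m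
        obtain ⟨C, hCp, hCs⟩ := exists_surjective_coloring G hcol hmN
        have h2 : 2 * ghDist V (SimplexPt m) ≤ a := by
          have hCs' : Function.Surjective (show V → SimplexPt m from C) := hCs
          refine two_ghDist_le_of_surj (show V → SimplexPt m from C) hCs' ?_
          intro x y
          show |dist x y - (if C x = C y then (0:ℝ) else a)| ≤ a
          by_cases hxy : x = y
          · subst hxy; simpa using ha.le
          · rw [hdist x y hxy]
            by_cases hC : C x = C y
            · have hna : ¬ G.Adj x y := fun h => hCp x y h hC
              rw [if_pos hC, if_neg hna, sub_zero, abs_of_nonneg ha.le]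
            · rw [if_neg hC]
              split_ifs with hadj
              · rw [abs_of_nonneg (by linarith)]; linarith
              · simp [ha.le]
        rw [my_ghDist_comm] at h2
        exact h2
      · -- surjection SimplexPt m → V
        set e := Fintype.equivFin V with he
        have hΨ : ∃ Ψ : SimplexPt m → V, Function.Surjective Ψ := by
          refine ⟨fun δ => e.symm ⟨min (Fin.val (show Fin m from δ)) (N - 1), by omega⟩, ?_⟩
          intro v
          refine ⟨(show SimplexPt m from (⟨(e v).val, by omega⟩ : Fin m)), ?_⟩
          have hev : (e v).val ≤ N - 1 := by
            have := (e v).isLt; omega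
          simp only [min_eq_left hev]
          have : (⟨(e v).val, by omega⟩ : Fin N) = e v := Fin.ext rfl
          rw [this, Equiv.symm_apply_apply]
        obtain ⟨Ψ, hΨs⟩ := hΨ
        refine two_ghDist_le_of_surj Ψ hΨs ?_
        intro δ δ'
        by_cases hδ : δ = δ'
        · subst hδ; simpa using ha.le
        · rw [simplexMetric_dist m ha, if_neg hδ]
          have h0 : 0 ≤ dist (Ψ δ) (Ψ δ') := dist_nonneg
          have h1 : dist (Ψ δ) (Ψ δ') ≤ b := hVle _ _
          rw [abs_le]
          constructor <;> linarith
    linarith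
  -- Part 2: G is (m+1)-colorable.
  have hcol1 : G.Colorable (m + 1) := by
    by_contra hnc
    have hmN : m + 1 < N := by
      by_contra hle
      push_neg at hle
      exact hnc ((G.colorable_of_fintype).mono hle)
    letI iΔ : MetricSpace (SimplexPt (m + 1)) := simplexMetric (m + 1) ha
    haveI hneΔ : Nonempty (SimplexPt (m + 1)) := ⟨(⟨0, Nat.succ_pos m⟩ : Fin (m + 1))⟩
    have hsp : IsSimplexOf (SimplexPt (m + 1)) (m + 1) a :=
      ⟨card_simplexPt (m + 1), fun x y h => by rw [simplexMetric_dist (m + 1) ha, if_neg h]⟩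
    have hne := hmax (m + 1) (Nat.lt_succ_self m) (SimplexPt (m + 1)) iΔ inferInstance hneΔ hsp
    set e := Fintype.equivFin V with he
    have hΦ : ∃ Φ : V → SimplexPt (m + 1), Function.Surjective Φ := by
      refine ⟨fun v => (show SimplexPt (m + 1) from (⟨min (e v).val m, by omega⟩ : Fin (m + 1))), ?_⟩
      intro j
      have hj : (Fin.val (show Fin (m + 1) from j)) ≤ m := by
        have := (show Fin (m + 1) from j).isLt; omega
      refine ⟨e.symm ⟨Fin.val (show Fin (m + 1) from j), by omega⟩, ?_⟩
      show (⟨min (e (e.symm ⟨Fin.val (show Fin (m + 1) from j), by omega⟩)).val m, by omega⟩ : Fin (m + 1)) = _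
      exact Fin.ext (by simp only [Equiv.apply_symm_apply]; simpa using hj)
    obtain ⟨Φ, hΦs⟩ := hΦ
    have hub : 2 * ghDist V (SimplexPt (m + 1)) ≤ b := by
      refine two_ghDist_le_of_surj Φ hΦs ?_
      intro x y
      have h0 : 0 ≤ dist x y := dist_nonneg
      have h1 : dist x y ≤ b := hVle x y
      have h2 : 0 ≤ @dist _ iΔ.toDist (Φ x) (Φ y) := dist_nonneg
      have h3 : @dist _ iΔ.toDist (Φ x) (Φ y) ≤ b := by
        rw [simplexMetric_dist (m + 1) ha]
        split_ifs <;> linarith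
      rw [abs_le]
      constructor <;> linarith
    have hlb : b ≤ 2 * ghDist (SimplexPt (m + 1)) V := by
      by_contra hlt
      push_neg at hlt
      have hc := colorable_of_two_ghDist_lt G
        (fun x y h => by rw [hdist x y h.ne, if_pos h]) (SimplexPt (m + 1)) hlt
      rw [card_simplexPt] at hc
      exact hnc hc
    rw [my_ghDist_comm] at hub
    exact hne (le_antisymm hub hlb)
  -- conclude
  have h1 : G.chromaticNumber ≤ (m + 1 : ℕ) :=
    SimpleGraph.chromaticNumber_le_iff_colorable.mpr hcol1
  have h2 : ¬ G.chromaticNumber ≤ (m : ℕ) := fun h =>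
    hnotm (SimpleGraph.chromaticNumber_le_iff_colorable.mp h)
  have h3 : (m : ℕ∞) < G.chromaticNumber := not_le.mp h2
  have h4 : (m : ℕ∞) + 1 ≤ G.chromaticNumber := Order.add_one_le_of_lt h3
  refine le_antisymm ?_ h4
  exact_mod_cast h1
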